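/- Let A be a finite-dimensional connected graded Poincaré algebra of top degree n over a field k, with augmentation ε, and let t be a nonzero element of the top component 𝒜 n. If M is a finitely generated free left A-module, then the space of invariants M^A := {x ∈ M : h•x = ε(h)·x for all h ∈ A} equals t•M := {t•m : m ∈ M}. -/

import Mathlib

/-- `A` is a finite-dimensional connected graded Poincaré algebra of top degree `n`
with respect to the grading `𝒜`: it is connected (`𝒜 0 = k·1`), vanishes above
degree `n`, and there is a linear functional `e : A → k` vanishing on `𝒜 m` for
`m ≠ n` such that for each `q ≤ n` the pairing
`𝒜 q × 𝒜 (n - q) → k, (x, y) ↦ e (x * y)` is nondegenerate (on both sides). -/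
def IsConnectedPoincare (k A : Type*) [Field k] [Ring A] [Algebra k A]
    (𝒜 : ℕ → Submodule k A) (n : ℕ) : Prop :=
  𝒜 0 = Submodule.span k ({1} : Set A) ∧
  (∀ m, n < m → 𝒜 m = ⊥) ∧
  ∃ e : A →ₗ[k] k,
    (∀ m, m ≠ n → ∀ x ∈ 𝒜 m, e x = 0) ∧
    ∀ q, q ≤ n →
      (∀ x ∈ 𝒜 q, x ≠ 0 → ∃ y ∈ 𝒜 (n - q), e (x * y) ≠ 0) ∧
      (∀ y ∈ 𝒜 (n - q), y ≠ 0 → ∃ x ∈ 𝒜 q, e (x * y) ≠ 0)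

/-- Let `A` be a finite-dimensional connected graded Poincaré
algebra of top degree `n` over `k` with augmentation `ε`, and let `t` be a nonzero
element of the top component `𝒜 n`.  If `M` is a finitely generated free left
`A`-module, then the space of invariants `M^A = {x : M | h • x = ε h • x for all h}`
equals `t • M = {t • m | m : M}`. -/
theorem invariants_eq_top_smul (k A : Type*) [Field k] [Ring A] [Algebra k A]
    [FiniteDimensional k A] (𝒜 : ℕ → Submodule k A) [GradedAlgebra 𝒜] (n : ℕ)
    (hP : IsConnectedPoincare k A 𝒜 n)
    (ε : A →ₐ[k] k) (hε : ∀ m, 0 < m → ∀ x ∈ 𝒜 m, ε x = 0)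
    (t : A) (htn : t ∈ 𝒜 n) (ht0 : t ≠ 0)
    (M : Type*) [AddCommGroup M] [Module k M] [Module A M] [IsScalarTower k A M]
    (hfree : Module.Free A M) (hfg : Module.Finite A M) :
    {x : M | ∀ h : A, h • x = ε h • x} = Set.range (fun m : M => t • m) := by
  classical
  obtain ⟨h0, htop, e, heoff, hnd⟩ := hP
  -- an element of 𝒜 n killed by e is zero
  have hzero : ∀ z ∈ 𝒜 n, e z = 0 → z = 0 := by
    intro z hz hez
    by_contra hz0
    obtain ⟨x, hx, hexz⟩ := (hnd 0 (Nat.zero_le n)).2 z (by simpa using hz) hz0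
    rw [h0, Submodule.mem_span_singleton] at hx
    obtain ⟨c, rfl⟩ := hx
    apply hexz
    rw [smul_mul_assoc, one_mul, map_smul, hez, smul_zero]
  -- 𝒜 n is contained in the line spanned by t
  have het : e t ≠ 0 := by
    obtain ⟨x, hx, hext⟩ := (hnd 0 (Nat.zero_le n)).2 t (by simpa using htn) ht0
    rw [h0, Submodule.mem_span_singleton] at hx
    obtain ⟨c, rfl⟩ := hx
    rw [smul_mul_assoc, one_mul, map_smul] at hext
    intro h
    apply hext
    rw [h, smul_zero]
  have hAn : ∀ z ∈ 𝒜 n, z ∈ Submodule.span k ({t} : Set A) := by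
    intro z hz
    have hsub : z - (e z / e t) • t = 0 := by
      apply hzero _ (Submodule.sub_mem _ hz (Submodule.smul_mem _ _ htn))
      rw [map_sub, map_smul, smul_eq_mul, div_mul_cancel₀ _ het, sub_self]
    rw [sub_eq_zero] at hsub
    rw [hsub]
    exact Submodule.smul_mem _ _ (Submodule.mem_span_singleton_self t)
  -- t is invariant for left multiplication
  have hth : ∀ h : A, h * t = ε h • t := by
    refine DirectSum.Decomposition.inductionOn 𝒜 ?_ ?_ ?_
    · rw [zero_mul, map_zero, zero_smul]
    · intro i m
      rcases Nat.eq_zero_or_pos i with hi | hi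
      · subst hi
        have hm : (m : A) ∈ Submodule.span k ({1} : Set A) := h0 ▸ m.2
        rw [Submodule.mem_span_singleton] at hm
        obtain ⟨c, hc⟩ := hm
        rw [← hc, smul_mul_assoc, one_mul, map_smul, smul_eq_mul, map_one,
          mul_one]
      · have h1 : (m : A) * t ∈ 𝒜 (i + n) := SetLike.mul_mem_graded m.2 htn
        rw [htop (i + n) (by omega)] at h1
        rw [Submodule.mem_bot] at h1
        rw [h1, hε i hi m m.2, zero_smul]
    · intro a b ha hb
      rw [add_mul, ha, hb, map_add, add_smul]
  -- invariant elements of A lie on the line spanned by t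
  have hinvA : ∀ a : A, (∀ h : A, h * a = ε h • a) →
      a ∈ Submodule.span k ({t} : Set A) := by
    intro a ha
    have hcomp : ∀ q, q ≠ n → (DirectSum.decompose 𝒜 a q : A) = 0 := by
      intro q hq
      rcases lt_or_gt_of_ne hq with hlt | hgt
      · by_contra haq
        have hmem : (DirectSum.decompose 𝒜 a q : A) ∈ 𝒜 (n - (n - q)) := by
          rw [Nat.sub_sub_self hlt.le]
          exact SetLike.coe_mem _
        obtain ⟨x, hx, hex⟩ := (hnd (n - q) (Nat.sub_le n q)).2 _ hmem haq
        have hxa : x * a = 0 := by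
          rw [ha x, hε (n - q) (by omega) x hx, zero_smul]
        have hsum : (0 : k) =
            ∑ j ∈ (DirectSum.decompose 𝒜 a).support,
              e (x * (DirectSum.decompose 𝒜 a j : A)) := by
          rw [← map_sum, ← Finset.mul_sum, DirectSum.sum_support_decompose, hxa,
            map_zero]
        have hterm : ∀ j ∈ (DirectSum.decompose 𝒜 a).support, j ≠ q →
            e (x * (DirectSum.decompose 𝒜 a j : A)) = 0 := by
          intro j _ hj
          exact heoff (n - q + j) (by omega) _
            (SetLike.mul_mem_graded hx (SetLike.coe_mem _))
        rw [Finset.sum_eq_single q hterm (fun hq' => by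
          rw [DFinsupp.notMem_support_iff.mp hq']
          simp)] at hsum
        exact hex hsum.symm
      · have : (DirectSum.decompose 𝒜 a q : A) ∈ (⊥ : Submodule k A) :=
          htop q hgt ▸ SetLike.coe_mem _
        simpa using this
    have han : a = (DirectSum.decompose 𝒜 a n : A) := by
      conv_lhs => rw [← DirectSum.sum_support_decompose 𝒜 a]
      refine Finset.sum_eq_single n (fun j _ hj => hcomp j hj) (fun hn => ?_)
      rw [DFinsupp.notMem_support_iff.mp hn]
      simp
    rw [han]
    exact hAn _ (SetLike.coe_mem _)
  -- the main statement
  ext x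
  constructor
  · intro hx
    set ι := Module.Free.ChooseBasisIndex A M
    set b : Module.Basis ι A M := Module.Free.chooseBasis A M with hb
    have hci : ∀ i : ι, ∀ h : A, h * b.repr x i = ε h • b.repr x i := by
      intro i h
      have h1 : h • x = (algebraMap k A (ε h)) • x := by
        rw [algebraMap_smul]; exact hx h
      have h2 := congrArg (fun y => b.repr y i) h1
      simp only [map_smul, Finsupp.smul_apply, smul_eq_mul] at h2
      rw [h2, Algebra.smul_def]
    choose d hd using fun i =>
      Submodule.mem_span_singleton.mp (hinvA _ (hci i))
    refine ⟨∑ i, d i • b i, ?_⟩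
    calc t • ∑ i, d i • b i = ∑ i, b.repr x i • b i := by
          rw [Finset.smul_sum]
          refine Finset.sum_congr rfl fun i _ => ?_
          rw [← hd i, ← algebraMap_smul A (d i) (b i), ← mul_smul,
            ← Algebra.commutes, ← Algebra.smul_def]
      _ = x := b.sum_repr x
  · rintro ⟨m, rfl⟩
    intro h
    show h • (t • m) = ε h • (t • m)
    rw [← mul_smul, hth h, smul_assoc]
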